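/- Let β ∈ [0,∞), γ ∈ (0,1], f ∈ H, and let (x_i)_{i≥1} be a weak β-greedy sequence for f with parameter γ. If for some n ≥ 1 and ε > 0 the closed absolutely convex hull acx(Φ(Ω)) admits an (n, ε)-cover, then min_{n+1 ≤ i ≤ 2n} ‖r_i‖_∞ ≤ γ^{−1} · (√5 · n^{(1−β)/2} · ε)^{1/max(1,β)} · ‖r_{n+1}‖_H. -/

import Mathlib

open scoped RealInnerProductSpace

variable {H : Type*} [NormedAddCommGroup H] [InnerProductSpace ℝ H] {Ω : Type*}

/-- The kernel interpolant `I_X f`: the orthogonal projection of `f` onto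
`V(X) = span {Φ(x) : x ∈ X}`. -/
noncomputable def interp (Φ : Ω → H) (X : Finset Ω) (f : H) : H :=
  haveI : FiniteDimensional ℝ (Submodule.span ℝ (Φ '' (X : Set Ω))) :=
    FiniteDimensional.span_of_finite ℝ (X.finite_toSet.image Φ)
  (Submodule.orthogonalProjection (Submodule.span ℝ (Φ '' (X : Set Ω))) f : H)

/-- The power function `P_X(z) = ‖Φ(z) − Π_{V(X)} Φ(z)‖`. -/
noncomputable def powerFun (Φ : Ω → H) (X : Finset Ω) (z : Ω) : ℝ :=
  ‖Φ z - interp Φ X (Φ z)‖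

/-- The sup norm `‖g‖_∞ = sup_{x ∈ Ω} |g(x)|`, where `g(x) = ⟪g, Φ(x)⟫`. -/
noncomputable def supNorm (Φ : Ω → H) (g : H) : ℝ := ⨆ x : Ω, |⟪g, Φ x⟫|

/-- `X_i = {x_1, …, x_i}` (so `X_0 = ∅`). -/
noncomputable def Xset (x : ℕ → Ω) (i : ℕ) : Finset Ω := by
  classical exact (Finset.Icc 1 i).image x

/-- `(x_i)_{i ≥ 1}` is a weak β-greedy sequence for `f` with parameter `γ`:
for every `i ≥ 0` and `z ∈ Ω`,
`γ · |r_i(z)|^β · P_{X_i}(z)^{1−β} ≤ |r_i(x_{i+1})|^β · P_{X_i}(x_{i+1})^{1−β}`,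
where `r_i = f − I_{X_i} f`. -/
def IsWeakGreedy (Φ : Ω → H) (f : H) (β γ : ℝ) (x : ℕ → Ω) : Prop :=
  ∀ (i : ℕ) (z : Ω),
    γ * |⟪f - interp Φ (Xset x i) f, Φ z⟫| ^ β * powerFun Φ (Xset x i) z ^ (1 - β)
      ≤ |⟪f - interp Φ (Xset x i) f, Φ (x (i + 1))⟫| ^ β
          * powerFun Φ (Xset x i) (x (i + 1)) ^ (1 - β)

/-- The closed absolutely convex (symmetric convex) hull of `K`. -/
def acx (K : Set H) : Set H :=
  closure {y : H | ∃ (m : ℕ) (c : Fin m → ℝ) (g : Fin m → H),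
    (∀ j, g j ∈ K) ∧ (∑ j, |c j|) ≤ 1 ∧ y = ∑ j, c j • g j}

/-- `S` admits an `(n, ε)`-cover: it can be covered by at most `2^n` closed balls of
radius `ε`. -/
def HasCover (S : Set H) (n : ℕ) (ε : ℝ) : Prop :=
  ∃ (q : ℕ) (y : Fin q → H), q ≤ 2 ^ n ∧ S ⊆ ⋃ j, Metric.closedBall (y j) ε

open MeasureTheory Finset Pointwise

/-! ### auxiliary: volume / covering lemma in `Fin n → ℝ` -/

/-- ℓ¹-ball in `Fin n → ℝ`. -/
def WGl1ball (n : ℕ) : Set (Fin n → ℝ) := {l | (∑ k, |l k|) ≤ 1}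

lemma WGl1ball_vol_pos (n : ℕ) (hn : 1 ≤ n) : 0 < volume (WGl1ball n) := by
  refine lt_of_lt_of_le (Metric.measure_ball_pos volume (0 : Fin n → ℝ) (r := 1/n) (by positivity)) ?_
  refine measure_mono ?_
  intro l hl
  simp only [Metric.mem_ball, dist_zero_right] at hl
  have hb : ∀ k, |l k| ≤ ‖l‖ := fun k => by
    simpa using norm_le_pi_norm l k
  have h1 : (∑ k, |l k|) ≤ n * ‖l‖ := by
    calc (∑ k, |l k|) ≤ ∑ _k : Fin n, ‖l‖ := Finset.sum_le_sum (fun k _ => hb k)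
    _ = n * ‖l‖ := by simp [mul_comm]
  refine le_trans h1 ?_
  have hn' : (0:ℝ) < n := by positivity
  calc (n:ℝ) * ‖l‖ ≤ n * (1/n) := mul_le_mul_of_nonneg_left hl.le hn'.le
  _ = 1 := by field_simp

lemma WGl1ball_vol_lt_top (n : ℕ) : volume (WGl1ball n) < ⊤ := by
  refine lt_of_le_of_lt (measure_mono ?_) (measure_closedBall_lt_top (x := (0:Fin n → ℝ)) (r := 1))
  intro l hl
  simp only [Metric.mem_closedBall, dist_zero_right]
  refine (pi_norm_le_iff_of_nonneg ?_).2 (fun k => ?_)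
  · exact le_trans (Finset.sum_nonneg (fun k _ => abs_nonneg _)) hl
  · calc ‖l k‖ = |l k| := rfl
    _ ≤ ∑ j, |l j| := Finset.single_le_sum (f := fun j => |l j|) (fun j _ => abs_nonneg _) (Finset.mem_univ k)
    _ ≤ 1 := hl

lemma WGdet_le_of_cover {n q : ℕ} (hn : 1 ≤ n) {ε : ℝ} (hε : 0 < ε)
    (M : Matrix (Fin n) (Fin n) ℝ) (y : Fin q → (Fin n → ℝ)) (hq : q ≤ 2^n)
    (hs : ∀ l : Fin n → ℝ, (∑ k, |l k|) ≤ 1 →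
      ∃ j, ∑ k, (M.mulVec l k - y j k)^2 ≤ ε^2) :
    |M.det| ≤ (2 * Real.sqrt n * ε)^n := by
  classical
  set s : ℝ := Real.sqrt n * ε with hs_def
  have hsn : (0:ℝ) < Real.sqrt n := Real.sqrt_pos.2 (by positivity)
  have hspos : 0 < s := by positivity
  set C : Set (Fin n → ℝ) := WGl1ball n with hC
  have key : (Matrix.toLin' M) '' C ⊆ ⋃ j, ((y j + ·) '' (s • C)) := by
    rintro - ⟨l, hl, rfl⟩
    obtain ⟨j, hj⟩ := hs l hl
    refine Set.mem_iUnion.2 ⟨j, ?_⟩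
    set w : Fin n → ℝ := fun k => M.mulVec l k - y j k with hw
    have hw1 : (∑ k, |w k|) ≤ s := by
      have h1 : (∑ k, |w k|)^2 ≤ n * ∑ k, (w k)^2 := by
        have := sq_sum_le_card_mul_sum_sq (s := Finset.univ) (f := fun k => |w k|)
        simpa [sq_abs] using this
      have h2 : (∑ k, |w k|)^2 ≤ n * ε^2 :=
        h1.trans (mul_le_mul_of_nonneg_left hj (by positivity))
      have h3 : (n:ℝ) * ε^2 = s^2 := by
        rw [hs_def, mul_pow, Real.sq_sqrt (by positivity)]
      have h4 : (∑ k, |w k|)^2 ≤ s^2 := by rw [← h3]; exact h2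
      have h5 := Real.sqrt_le_sqrt h4
      rwa [Real.sqrt_sq (Finset.sum_nonneg fun k _ => abs_nonneg _),
        Real.sqrt_sq hspos.le] at h5
    refine ⟨Matrix.toLin' M l - y j, ?_, by simp⟩
    refine ⟨s⁻¹ • (Matrix.toLin' M l - y j), ?_, by
      simp [smul_smul, mul_inv_cancel₀ hspos.ne']⟩
    show (∑ k, |(s⁻¹ • (Matrix.toLin' M l - y j)) k|) ≤ 1
    have habs : ∀ k, |(s⁻¹ • (Matrix.toLin' M l - y j)) k| = s⁻¹ * |w k| := by
      intro k
      simp only [Pi.smul_apply, smul_eq_mul, abs_mul, abs_inv, abs_of_pos hspos,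
        Matrix.toLin'_apply, hw, Pi.sub_apply]
    rw [Finset.sum_congr rfl (fun k _ => habs k), ← Finset.mul_sum]
    rw [inv_mul_le_iff₀ hspos]
    simpa using hw1
  have himg : volume ((Matrix.toLin' M) '' C)
      = ENNReal.ofReal |M.det| * volume C := by
    rw [Measure.addHaar_image_linearMap, LinearMap.det_toLin']
  have htrans : ∀ j : Fin q, volume ((y j + ·) '' (s • C)) = ENNReal.ofReal (s ^ n) * volume C := by
    intro j
    rw [Set.image_add_left, measure_preimage_add]
    rw [Measure.addHaar_smul_of_nonneg volume hspos.le]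
    congr 2
    simp [Module.finrank_fin_fun, abs_of_pos hspos]
  have hub : ENNReal.ofReal |M.det| * volume C
      ≤ ((2:ENNReal)^n * ENNReal.ofReal (s ^ n)) * volume C := by
    rw [← himg]
    refine le_trans (measure_mono key) ?_
    refine le_trans (measure_iUnion_le _) ?_
    rw [tsum_fintype]
    calc (∑ j : Fin q, volume ((y j + ·) '' (s • C)))
        = ∑ _j : Fin q, ENNReal.ofReal (s ^ n) * volume C :=
          Finset.sum_congr rfl (fun j _ => htrans j)
      _ = (q:ENNReal) * (ENNReal.ofReal (s ^ n) * volume C) := by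
          simp [Finset.sum_const, nsmul_eq_mul]
      _ ≤ ((2:ENNReal)^n * ENNReal.ofReal (s ^ n)) * volume C := by
          rw [mul_assoc]
          refine mul_le_mul_left ?_ _
          exact_mod_cast Nat.cast_le.2 hq
  have hCpos := WGl1ball_vol_pos n hn
  have hCtop := WGl1ball_vol_lt_top n
  have hcancel : ENNReal.ofReal |M.det| ≤ (2:ENNReal)^n * ENNReal.ofReal (s ^ n) :=
    (ENNReal.mul_le_mul_iff_left hCpos.ne' hCtop.ne).1 hub
  have h2n : (2:ENNReal)^n * ENNReal.ofReal (s ^ n) = ENNReal.ofReal ((2*s)^n) := by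
    rw [show ((2:ENNReal))^n = ENNReal.ofReal ((2:ℝ)^n) by
        rw [ENNReal.ofReal_pow (by norm_num)]; norm_num,
      ← ENNReal.ofReal_mul (by positivity), mul_pow]
    congr 1
    rw [hs_def]
    ring
  rw [h2n] at hcancel
  have hfin := (ENNReal.ofReal_le_ofReal_iff (by positivity)).1 hcancel
  calc |M.det| ≤ (2*s)^n := hfin
  _ = (2 * Real.sqrt n * ε)^n := by rw [hs_def]; ring

/-! ### auxiliary: orthogonal projection lemmas -/

noncomputable def Vs (Φ : Ω → H) (X : Finset Ω) : Submodule ℝ H :=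
  Submodule.span ℝ (Φ '' (X : Set Ω))

instance (Φ : Ω → H) (X : Finset Ω) : FiniteDimensional ℝ (Vs Φ X) :=
  FiniteDimensional.span_of_finite ℝ (X.finite_toSet.image Φ)

lemma interp_eq (Φ : Ω → H) (X : Finset Ω) (f : H) :
    interp Φ X f = (Submodule.orthogonalProjection (Vs Φ X) f : H) := rfl

lemma interp_mem (Φ : Ω → H) (X : Finset Ω) (f : H) : interp Φ X f ∈ Vs Φ X := by
  rw [interp_eq]; exact (Submodule.orthogonalProjection (Vs Φ X) f).2

lemma inner_sub_interp (Φ : Ω → H) (X : Finset Ω) (f : H) {v : H} (hv : v ∈ Vs Φ X) :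
    ⟪f - interp Φ X f, v⟫ = 0 := by
  rw [interp_eq]
  exact Submodule.starProjection_inner_eq_zero f v hv

lemma norm_sub_interp_le (Φ : Ω → H) (X : Finset Ω) (f : H) {v : H} (hv : v ∈ Vs Φ X) :
    ‖f - interp Φ X f‖ ≤ ‖f - v‖ := by
  have h : ⟪f - interp Φ X f, interp Φ X f - v⟫ = 0 :=
    inner_sub_interp Φ X f (Submodule.sub_mem _ (interp_mem Φ X f) hv)
  have hexp : ‖f - v‖^2 = ‖f - interp Φ X f‖^2 + ‖interp Φ X f - v‖^2 := by
    have := norm_add_sq_real (f - interp Φ X f) (interp Φ X f - v)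
    rw [h] at this
    simpa [sub_add_sub_cancel] using this
  nlinarith [norm_nonneg (f - v), norm_nonneg (f - interp Φ X f), sq_nonneg ‖interp Φ X f - v‖]

lemma Vs_mono (Φ : Ω → H) {X Y : Finset Ω} (h : X ⊆ Y) : Vs Φ X ≤ Vs Φ Y :=
  Submodule.span_mono (Set.image_mono (by exact_mod_cast h))

lemma supNorm_le [Nonempty Ω] (Φ : Ω → H) (g : H) {a : ℝ} (h : ∀ z, |⟪g, Φ z⟫| ≤ a) :
    supNorm Φ g ≤ a := ciSup_le h

/-! ### main theorem -/

set_option maxHeartbeats 2000000 in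
theorem statement_6 [Nonempty Ω]
    (Φ : Ω → H) (hΦ : ∀ z : Ω, ‖Φ z‖ ≤ 1)
    (β γ : ℝ) (hβ : 0 ≤ β) (hγ0 : 0 < γ) (hγ1 : γ ≤ 1)
    (f : H) (x : ℕ → Ω) (hx : IsWeakGreedy Φ f β γ x)
    (n : ℕ) (hn : 1 ≤ n) (ε : ℝ) (hε : 0 < ε)
    (hcov : HasCover (acx (Set.range Φ)) n ε) :
    (Finset.Icc (n + 1) (2 * n)).inf' (Finset.nonempty_Icc.mpr (by omega))
        (fun i => supNorm Φ (f - interp Φ (Xset x i) f))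
      ≤ γ⁻¹ * (Real.sqrt 5 * (n : ℝ) ^ ((1 - β) / 2) * ε) ^ (1 / max 1 β)
          * ‖f - interp Φ (Xset x (n + 1)) f‖ := by
  classical
  set r : ℕ → H := fun i => f - interp Φ (Xset x i) f with hr_def
  set P : ℕ → Ω → ℝ := fun i z => powerFun Φ (Xset x i) z with hP_def
  set V : ℕ → Submodule ℝ H := fun i => Vs Φ (Xset x i) with hV_def
  set c : ℕ → ℝ := fun i => P i (x (i+1)) with hc_def
  set d : ℕ → H := fun i => r i - r (i+1) with hd_def
  set R : ℝ := ‖r (n+1)‖ with hR_def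
  have hne : (Finset.Icc (n + 1) (2 * n)).Nonempty := Finset.nonempty_Icc.mpr (by omega)
  -- RHS is nonnegative
  have hRHS0 : 0 ≤ γ⁻¹ * (Real.sqrt 5 * (n : ℝ) ^ ((1 - β) / 2) * ε) ^ (1 / max 1 β) * R := by
    have h1 : (0:ℝ) ≤ Real.sqrt 5 * (n : ℝ) ^ ((1 - β) / 2) * ε :=
      mul_nonneg (mul_nonneg (Real.sqrt_nonneg _) (Real.rpow_nonneg (by positivity) _)) hε.le
    have := Real.rpow_nonneg h1 (1 / max 1 β)
    positivity
  -- basic facts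
  have hVmono : ∀ {i j : ℕ}, i ≤ j → V i ≤ V j := by
    intro i j hij
    exact Vs_mono Φ (Finset.image_subset_image (Finset.Icc_subset_Icc_right hij))
  have hr_orth : ∀ (i : ℕ) {v : H}, v ∈ V i → ⟪r i, v⟫ = 0 := by
    intro i v hv
    exact inner_sub_interp Φ (Xset x i) f hv
  have hPhi_mem : ∀ i : ℕ, Φ (x (i+1)) ∈ V (i+1) := by
    intro i
    refine Submodule.subset_span ⟨x (i+1), ?_, rfl⟩
    simp only [Finset.coe_image, Set.mem_image, Finset.mem_coe, Xset]
    exact ⟨i+1, Finset.mem_Icc.mpr ⟨by omega, le_rfl⟩, rfl⟩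
  have hP_eq : ∀ i z, P i z = ‖Φ z - interp Φ (Xset x i) (Φ z)‖ := fun i z => rfl
  have hP_nonneg : ∀ i z, 0 ≤ P i z := fun i z => norm_nonneg _
  have hP_le_one : ∀ i z, P i z ≤ 1 := by
    intro i z
    rw [hP_eq]
    refine le_trans (norm_sub_interp_le Φ (Xset x i) (Φ z) (Submodule.zero_mem _)) ?_
    simpa using hΦ z
  have hiP : ∀ i z, |⟪r i, Φ z⟫| ≤ ‖r i‖ * P i z := by
    intro i z
    have h1 : ⟪r i, Φ z⟫ = ⟪r i, Φ z - interp Φ (Xset x i) (Φ z)⟫ := by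
      rw [inner_sub_right, hr_orth i (interp_mem Φ (Xset x i) (Φ z)), sub_zero]
    rw [h1, hP_eq]
    exact abs_real_inner_le_norm _ _
  have hPz_zero : ∀ i z, P i z = 0 → ⟪r i, Φ z⟫ = 0 := by
    intro i z h0
    rw [hP_eq] at h0
    have h1 : Φ z = interp Φ (Xset x i) (Φ z) := sub_eq_zero.1 (norm_eq_zero.1 h0)
    rw [h1]
    exact hr_orth i (interp_mem Φ (Xset x i) (Φ z))
  -- w, d facts
  set w : ℕ → H := fun i => Φ (x (i+1)) - interp Φ (Xset x i) (Φ (x (i+1))) with hw_def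
  have hcw : ∀ i, c i = ‖w i‖ := fun i => rfl
  have hw_orth : ∀ (i : ℕ) {v : H}, v ∈ V i → ⟪w i, v⟫ = 0 := by
    intro i v hv
    exact inner_sub_interp Φ (Xset x i) (Φ (x (i+1))) hv
  have hw_mem : ∀ i, w i ∈ V (i+1) := by
    intro i
    exact Submodule.sub_mem _ (hPhi_mem i)
      (hVmono (Nat.le_succ i) (interp_mem Φ (Xset x i) (Φ (x (i+1)))))
  have hd_mem : ∀ i, d i ∈ V (i+1) := by
    intro i
    have : d i = interp Φ (Xset x (i+1)) f - interp Φ (Xset x i) f := by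
      simp only [hd_def, hr_def]; abel
    rw [this]
    exact Submodule.sub_mem _ (interp_mem Φ (Xset x (i+1)) f)
      (hVmono (Nat.le_succ i) (interp_mem Φ (Xset x i) f))
  have hrd : ∀ i, r i = r (i+1) + d i := by intro i; simp [hd_def]
  have hr_inner_d : ∀ i, ⟪r (i+1), d i⟫ = 0 := fun i => hr_orth (i+1) (hd_mem i)
  -- F8
  have hF8 : ∀ i, |⟪r i, Φ (x (i+1))⟫| ≤ c i * ‖d i‖ := by
    intro i
    have h1 : ⟪r i, Φ (x (i+1))⟫ = ⟪r i, w i⟫ := by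
      rw [hw_def]
      rw [inner_sub_right, hr_orth i (interp_mem Φ (Xset x i) (Φ (x (i+1)))), sub_zero]
    have h2 : ⟪r i, w i⟫ = ⟪d i, w i⟫ := by
      rw [hrd i, inner_add_left, hr_orth (i+1) (hw_mem i), zero_add]
    rw [h1, h2, hcw, mul_comm]
    exact abs_real_inner_le_norm _ _
  -- residual norm monotone
  have hRmono : ∀ i, n+1 ≤ i → ‖r i‖ ≤ R := by
    intro i hi
    rw [hR_def]
    calc ‖r i‖ ≤ ‖f - interp Φ (Xset x (n+1)) f‖ := by
          refine norm_sub_interp_le Φ (Xset x i) f ?_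
          exact hVmono hi (interp_mem Φ (Xset x (n+1)) f)
    _ = R := rfl
  -- sum of ‖d‖² bounded
  have hsum_d : (∑ k ∈ Finset.range n, ‖d (n+1+k)‖^2) ≤ R^2 := by
    have hpyth : ∀ i, ‖r i‖^2 = ‖r (i+1)‖^2 + ‖d i‖^2 := by
      intro i
      have := norm_add_sq_real (r (i+1)) (d i)
      rw [hr_inner_d i] at this
      rw [hrd i] -- goal about ‖r (i+1) + d i‖
      simpa using this
    have htel : (∑ k ∈ Finset.range n, (‖r (n+1+k)‖^2 - ‖r (n+1+(k+1))‖^2))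
        = ‖r (n+1+0)‖^2 - ‖r (n+1+n)‖^2 :=
      Finset.sum_range_sub' (f := fun k => ‖r (n+1+k)‖^2) n
    have heq : ∀ k, ‖d (n+1+k)‖^2 = ‖r (n+1+k)‖^2 - ‖r (n+1+(k+1))‖^2 := by
      intro k
      have := hpyth (n+1+k)
      have hidx : n+1+(k+1) = (n+1+k)+1 := by omega
      rw [hidx]
      linarith
    calc (∑ k ∈ Finset.range n, ‖d (n+1+k)‖^2)
        = ∑ k ∈ Finset.range n, (‖r (n+1+k)‖^2 - ‖r (n+1+(k+1))‖^2) :=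
          Finset.sum_congr rfl (fun k _ => heq k)
      _ = ‖r (n+1+0)‖^2 - ‖r (n+1+n)‖^2 := htel
      _ ≤ ‖r (n+1)‖^2 := by nlinarith [norm_nonneg (r (n+1+n))]
      _ = R^2 := rfl
  -- trivial case: some supNorm ≤ 0
  by_cases h0 : ∃ i ∈ Finset.Icc (n + 1) (2 * n), supNorm Φ (r i) ≤ 0
  · obtain ⟨i, hi, hsi⟩ := h0
    refine le_trans (Finset.inf'_le _ hi) (le_trans hsi hRHS0)
  push_neg at h0
  -- c i > 0 on the range
  have hcpos : ∀ i ∈ Finset.Icc (n+1) (2*n), 0 < c i := by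
    intro i hi
    rcases lt_or_eq_of_le (hP_nonneg i (x (i+1))) with h | h
    · exact h
    exfalso
    refine absurd (le_of_eq ?_) (not_le.2 (h0 i hi))
    -- supNorm Φ (r i) = 0
    have hrx0 : |⟪r i, Φ (x (i+1))⟫| = 0 := by
      have h1 := hiP i (x (i+1))
      have h2 : ‖r i‖ * P i (x (i+1)) = 0 := by
        rw [← h, mul_zero]
      exact le_antisymm (h1.trans_eq h2) (abs_nonneg _)
    have hrhs0 : |⟪r i, Φ (x (i+1))⟫| ^ β * c i ^ (1-β) = 0 := by
      rcases eq_or_lt_of_le hβ with hb0 | hb0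
      · rw [← hb0]
        simp only [Real.rpow_zero, sub_zero, one_mul, Real.rpow_one]
        exact h.symm
      · rw [hrx0, Real.zero_rpow (ne_of_gt hb0), zero_mul]
    have hz0 : ∀ z, ⟪r i, Φ z⟫ = 0 := by
      intro z
      have hg := hx i z
      rw [show powerFun Φ (Xset x i) (x (i+1)) = c i from rfl] at hg
      rw [hrhs0] at hg
      by_cases hPz : P i z = 0
      · exact hPz_zero i z hPz
      have hPzpos : 0 < P i z := lt_of_le_of_ne (hP_nonneg i z) (Ne.symm hPz)
      rcases eq_or_lt_of_le hβ with hb0 | hb0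
      · -- β = 0 : γ * 1 * P ≤ 0, contradiction
        exfalso
        rw [← hb0] at hg
        simp only [Real.rpow_zero, sub_zero, mul_one, Real.rpow_one] at hg
        nlinarith [mul_pos hγ0 hPzpos]
      · by_contra hrz
        have h1 : 0 < |⟪r i, Φ z⟫| := abs_pos.2 hrz
        have h2 : 0 < |⟪r i, Φ z⟫| ^ β := Real.rpow_pos_of_pos h1 β
        have h3 : 0 < P i z ^ (1-β) := Real.rpow_pos_of_pos hPzpos _
        nlinarith [mul_pos (mul_pos hγ0 h2) h3]
    refine le_antisymm (supNorm_le Φ (r i) (fun z => by rw [hz0 z]; simp)) ?_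
    exact Real.iSup_nonneg (fun z => abs_nonneg _)
  -- r i ≠ 0 on the range
  have hrpos : ∀ i ∈ Finset.Icc (n+1) (2*n), 0 < ‖r i‖ := by
    intro i hi
    rcases eq_or_lt_of_le (norm_nonneg (r i)) with h | h
    · exfalso
      have hri : r i = 0 := by rwa [eq_comm, norm_eq_zero] at h
      refine absurd (le_of_eq ?_) (not_le.2 (h0 i hi))
      refine le_antisymm (supNorm_le Φ (r i) (fun z => by rw [hri]; simp)) ?_
      exact Real.iSup_nonneg (fun z => abs_nonneg _)
    · exact h
  have hRpos : 0 < R := hrpos (n+1) (by simp [Finset.mem_Icc]; omega)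
  -- key greedy bound: γ |r_i(z)|^β P_i(z)^{1-β} ≤ c i ‖d i‖^β
  have hgreedy : ∀ i ∈ Finset.Icc (n+1) (2*n), ∀ z,
      γ * |⟪r i, Φ z⟫| ^ β * P i z ^ (1 - β) ≤ c i * ‖d i‖ ^ β := by
    intro i hi z
    refine le_trans (hx i z) ?_
    have h1 : |⟪r i, Φ (x (i+1))⟫| ^ β ≤ (c i * ‖d i‖) ^ β :=
      Real.rpow_le_rpow (abs_nonneg _) (hF8 i) hβ
    have hci := hcpos i hi
    calc |⟪r i, Φ (x (i+1))⟫| ^ β * powerFun Φ (Xset x i) (x (i+1)) ^ (1-β)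
        ≤ (c i * ‖d i‖) ^ β * c i ^ (1-β) := by
          refine mul_le_mul_of_nonneg_right h1 ?_
          exact Real.rpow_nonneg (hP_nonneg i _) _
      _ = c i * ‖d i‖ ^ β := by
          rw [Real.mul_rpow hci.le (norm_nonneg _)]
          have hcc : c i ^ β * c i ^ (1-β) = c i := by
            rw [← Real.rpow_add hci]
            norm_num
          calc c i ^ β * ‖d i‖ ^ β * c i ^ (1-β)
              = (c i ^ β * c i ^ (1-β)) * ‖d i‖ ^ β := by ring
            _ = c i * ‖d i‖ ^ β := by rw [hcc]
  -- orthonormal family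
  set u : ℕ → H := fun i => (c i)⁻¹ • w i with hu_def
  have hu_orth : ∀ (i : ℕ) {v : H}, v ∈ V i → ⟪u i, v⟫ = 0 := by
    intro i v hv
    rw [hu_def]
    simp only [real_inner_smul_left]
    rw [hw_orth i hv, mul_zero]
  have hu_mem : ∀ i, u i ∈ V (i+1) := fun i => Submodule.smul_mem _ _ (hw_mem i)
  set uu : Fin n → H := fun k => u (n+1+(k:ℕ)) with huu_def
  have huu_on : Orthonormal ℝ uu := by
    rw [orthonormal_iff_ite]
    have key : ∀ k k' : Fin n, (k:ℕ) < (k':ℕ) → ⟪uu k', uu k⟫ = 0 := by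
      intro k k' hkk
      refine hu_orth (n+1+(k':ℕ)) ?_
      refine hVmono ?_ (hu_mem (n+1+(k:ℕ)))
      omega
    intro k k'
    rcases lt_trichotomy (k:ℕ) (k':ℕ) with h | h | h
    · rw [if_neg (by intro hc; rw [hc] at h; omega)]
      rw [real_inner_comm]
      exact key k k' h
    · have : k = k' := Fin.ext h
      rw [if_pos this, ← this]
      have hci : 0 < c (n+1+(k:ℕ)) := hcpos _ (by simp [Finset.mem_Icc]; omega)
      rw [huu_def]
      simp only [hu_def, real_inner_smul_left, real_inner_smul_right]
      rw [real_inner_self_eq_norm_sq, ← hcw]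
      field_simp
    · rw [if_neg (by intro hc; rw [hc] at h; omega)]
      exact key k' k h
  -- diagonal and triangular entries
  have hdiag : ∀ k : Fin n, ⟪uu k, Φ (x (n+1+(k:ℕ)+1))⟫ = c (n+1+(k:ℕ)) := by
    intro k
    set i := n+1+(k:ℕ)
    have hci : 0 < c i := hcpos _ (by simp [Finset.mem_Icc, i]; omega)
    have hsplit : Φ (x (i+1)) = w i + interp Φ (Xset x i) (Φ (x (i+1))) :=
      (sub_add_cancel _ _).symm
    rw [huu_def]
    show ⟪u i, Φ (x (i+1))⟫ = c i
    rw [hsplit, inner_add_right, hu_orth i (interp_mem Φ (Xset x i) (Φ (x (i+1)))), add_zero]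
    rw [hu_def]
    simp only [real_inner_smul_left]
    rw [real_inner_self_eq_norm_sq, ← hcw]
    field_simp
  have htri : ∀ j k : Fin n, (k:ℕ) < (j:ℕ) → ⟪uu j, Φ (x (n+1+(k:ℕ)+1))⟫ = 0 := by
    intro j k hkj
    refine hu_orth (n+1+(j:ℕ)) ?_
    refine hVmono ?_ (hPhi_mem (n+1+(k:ℕ)))
    omega
  -- matrix and covering
  set M : Matrix (Fin n) (Fin n) ℝ := Matrix.of (fun j k => ⟪uu j, Φ (x (n+1+(k:ℕ)+1))⟫) with hM_def
  obtain ⟨q, y, hq, hsub⟩ := hcov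
  have hdet : |M.det| ≤ (2 * Real.sqrt n * ε)^n := by
    refine WGdet_le_of_cover hn hε M (fun j => fun k => ⟪uu k, y j⟫) hq ?_
    intro l hl
    set Pt : H := ∑ k, l k • Φ (x (n+1+(k:ℕ)+1)) with hPt_def
    have hPtmem : Pt ∈ acx (Set.range Φ) := by
      refine subset_closure ?_
      exact ⟨n, l, fun k => Φ (x (n+1+(k:ℕ)+1)), fun k => ⟨x (n+1+(k:ℕ)+1), rfl⟩, hl, rfl⟩
    obtain ⟨j, hj⟩ := Set.mem_iUnion.1 (hsub hPtmem)
    refine ⟨j, ?_⟩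
    have hdist : ‖Pt - y j‖ ≤ ε := by
      simpa [Metric.mem_closedBall, dist_eq_norm] using hj
    have hmv : ∀ k : Fin n, M.mulVec l k = ⟪uu k, Pt⟫ := by
      intro k
      rw [hPt_def, inner_sum]
      simp only [real_inner_smul_right]
      simp [Matrix.mulVec, dotProduct, hM_def, mul_comm]
    have hb : ∀ k : Fin n, (M.mulVec l k - ⟪uu k, y j⟫)^2 = ⟪uu k, Pt - y j⟫^2 := by
      intro k
      rw [hmv k, inner_sub_right]
    calc (∑ k, (M.mulVec l k - ⟪uu k, y j⟫)^2)
        = ∑ k, ⟪uu k, Pt - y j⟫^2 := Finset.sum_congr rfl (fun k _ => hb k)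
      _ ≤ ‖Pt - y j‖^2 := by
          have := huu_on.sum_inner_products_le (s := Finset.univ) (Pt - y j)
          simpa [Real.norm_eq_abs, sq_abs] using this
      _ ≤ ε^2 := by nlinarith [norm_nonneg (Pt - y j)]
  -- determinant equals product of diagonal
  have hsqrtn : (0:ℝ) < Real.sqrt n := Real.sqrt_pos.2 (by positivity)
  have hMdet : M.det = ∏ k : Fin n, c (n+1+(k:ℕ)) := by
    rw [Matrix.det_of_upperTriangular (by
      intro a b hab
      exact htri a b hab)]
    exact Finset.prod_congr rfl (fun k _ => hdiag k)
  have hcprod : (∏ k : Fin n, c (n+1+(k:ℕ))) ≤ (2 * Real.sqrt n * ε)^n := by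
    have hcnn : (0:ℝ) ≤ ∏ k : Fin n, c (n+1+(k:ℕ)) :=
      Finset.prod_nonneg (fun k _ => (hP_nonneg _ _))
    calc (∏ k : Fin n, c (n+1+(k:ℕ))) = |M.det| := by rw [hMdet, abs_of_nonneg hcnn]
    _ ≤ (2 * Real.sqrt n * ε)^n := hdet
  -- product of ‖d‖ bounded via AM-GM
  have hdprod : (∏ k : Fin n, ‖d (n+1+(k:ℕ))‖) ≤ (R / Real.sqrt n)^n := by
    have hnR : (0:ℝ) < n := by positivity
    have hsum' : (∑ k : Fin n, ‖d (n+1+(k:ℕ))‖^2) ≤ R^2 := by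
      rw [← Finset.sum_range (fun k => ‖d (n+1+k)‖^2)]
      exact hsum_d
    have hgm := Real.geom_mean_le_arith_mean_weighted Finset.univ
      (fun _ : Fin n => 1/(n:ℝ)) (fun k : Fin n => ‖d (n+1+(k:ℕ))‖^2)
      (fun i _ => by positivity)
      (by simp [Finset.sum_const, Finset.card_univ]; field_simp)
      (fun i _ => sq_nonneg _)
    have hgm2 : (∑ k : Fin n, 1/(n:ℝ) * ‖d (n+1+(k:ℕ))‖^2) ≤ R^2 / n := by
      rw [← Finset.mul_sum]
      calc 1/(n:ℝ) * ∑ k : Fin n, ‖d (n+1+(k:ℕ))‖^2 ≤ 1/(n:ℝ) * R^2 :=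
            mul_le_mul_of_nonneg_left hsum' (by positivity)
        _ = R^2 / n := by ring
    have hgm3 : (∏ k : Fin n, (‖d (n+1+(k:ℕ))‖^2) ^ ((1:ℝ)/n)) ≤ R^2/n :=
      le_trans hgm hgm2
    have hprod_eq : (∏ k : Fin n, ‖d (n+1+(k:ℕ))‖^2)
        = (∏ k : Fin n, (‖d (n+1+(k:ℕ))‖^2) ^ ((1:ℝ)/n)) ^ n := by
      rw [← Finset.prod_pow]
      refine Finset.prod_congr rfl (fun k _ => ?_)
      rw [← Real.rpow_natCast ((‖d (n+1+(k:ℕ))‖^2) ^ ((1:ℝ)/n)) n,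
        ← Real.rpow_mul (sq_nonneg _)]
      rw [one_div, inv_mul_cancel₀ (by positivity : (n:ℝ) ≠ 0), Real.rpow_one]
    have hsq : (∏ k : Fin n, ‖d (n+1+(k:ℕ))‖)^2 ≤ ((R / Real.sqrt n)^n)^2 := by
      have h1 : (∏ k : Fin n, ‖d (n+1+(k:ℕ))‖)^2 = ∏ k : Fin n, ‖d (n+1+(k:ℕ))‖^2 := by
        rw [← Finset.prod_pow]
      have h2 : ((R / Real.sqrt n)^n)^2 = (R^2/n)^n := by
        rw [← pow_mul, mul_comm n 2, pow_mul, div_pow, Real.sq_sqrt hnR.le]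
      rw [h1, h2, hprod_eq]
      refine pow_le_pow_left₀ ?_ hgm3 n
      exact Finset.prod_nonneg (fun k _ => Real.rpow_nonneg (sq_nonneg _) _)
    have hdnn : (0:ℝ) ≤ ∏ k : Fin n, ‖d (n+1+(k:ℕ))‖ :=
      Finset.prod_nonneg (fun k _ => norm_nonneg _)
    have hrhsnn : (0:ℝ) ≤ (R / Real.sqrt n)^n := by positivity
    nlinarith [hsq, hdnn, hrhsnn]
  -- pick minimizing index
  obtain ⟨k₀, hk₀mem, hmin⟩ := Finset.exists_min_image Finset.univ
    (fun k : Fin n => c (n+1+(k:ℕ)) * ‖d (n+1+(k:ℕ))‖ ^ β)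
    ⟨⟨0, by omega⟩, Finset.mem_univ _⟩
  set i₀ : ℕ := n+1+(k₀:ℕ) with hi₀_def
  have hk₀n : (k₀:ℕ) < n := k₀.2
  have hi₀mem : i₀ ∈ Finset.Icc (n+1) (2*n) := Finset.mem_Icc.mpr ⟨by omega, by omega⟩
  set B : ℝ := 2 * Real.sqrt n * ε * (R / Real.sqrt n)^β with hB_def
  have hB0 : 0 ≤ B := by positivity
  have haB : c i₀ * ‖d i₀‖^β ≤ B := by
    have hann : ∀ k : Fin n, 0 ≤ c (n+1+(k:ℕ)) * ‖d (n+1+(k:ℕ))‖ ^ β :=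
      fun k => mul_nonneg (hP_nonneg _ _) (Real.rpow_nonneg (norm_nonneg _) _)
    have hXnn : (0:ℝ) ≤ R / Real.sqrt n := by positivity
    have hpow : (c i₀ * ‖d i₀‖^β)^n ≤ B^n := by
      calc (c i₀ * ‖d i₀‖^β)^n
          = ∏ _k : Fin n, (c i₀ * ‖d i₀‖^β) := by
            rw [Finset.prod_const, Finset.card_univ, Fintype.card_fin]
        _ ≤ ∏ k : Fin n, (c (n+1+(k:ℕ)) * ‖d (n+1+(k:ℕ))‖ ^ β) :=
            Finset.prod_le_prod (fun k _ => hann k₀) (fun k _ => hmin k (Finset.mem_univ k))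
        _ = (∏ k : Fin n, c (n+1+(k:ℕ))) * ∏ k : Fin n, ‖d (n+1+(k:ℕ))‖ ^ β :=
            Finset.prod_mul_distrib
        _ ≤ (2 * Real.sqrt n * ε)^n * ((R / Real.sqrt n)^n)^β := by
            refine mul_le_mul hcprod ?_ ?_ (by positivity)
            · rw [Real.finset_prod_rpow Finset.univ _ (fun k _ => norm_nonneg _) β]
              exact Real.rpow_le_rpow
                (Finset.prod_nonneg (fun k _ => norm_nonneg _)) hdprod hβ
            · exact Finset.prod_nonneg
                (fun k _ => Real.rpow_nonneg (norm_nonneg _) _)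
        _ = B^n := by
            have hswap : ((R / Real.sqrt n)^(n:ℕ))^β = ((R / Real.sqrt n)^β)^(n:ℕ) := by
              rw [← Real.rpow_natCast (R / Real.sqrt n) n, ← Real.rpow_mul hXnn,
                mul_comm, Real.rpow_mul hXnn, Real.rpow_natCast]
            rw [hswap, hB_def]
            ring
    exact le_of_pow_le_pow_left₀ (by omega) hB0 hpow
  -- bounds relating B to the target constant
  have h25 : (2:ℝ) ≤ Real.sqrt 5 := by
    rw [show (2:ℝ) = Real.sqrt 4 by
      rw [show (4:ℝ) = 2^2 by norm_num, Real.sqrt_sq (by norm_num)]]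
    exact Real.sqrt_le_sqrt (by norm_num)
  have hsnpow : (Real.sqrt n)^(1-β) = (n:ℝ)^((1-β)/2) := by
    rw [Real.sqrt_eq_rpow, ← Real.rpow_mul (by positivity : (0:ℝ) ≤ (n:ℝ))]
    congr 1
    ring
  have hN2nn : (0:ℝ) ≤ (n:ℝ)^((1-β)/2) := Real.rpow_nonneg (by positivity) _
  have hdiv : (R / Real.sqrt n)^β = R^β / (Real.sqrt n)^β :=
    Real.div_rpow hRpos.le hsqrtn.le β
  have hsdivs : Real.sqrt n / (Real.sqrt n)^β = (Real.sqrt n)^(1-β) := by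
    rw [Real.rpow_sub hsqrtn, Real.rpow_one]
  have hRR : R^β * R^(1-β) = R := by
    rw [← Real.rpow_add hRpos]; norm_num
  -- conclusion
  refine le_trans (Finset.inf'_le _ hi₀mem) ?_
  by_cases hble : β ≤ 1
  · -- case β ≤ 1
    have hmax : max 1 β = 1 := max_eq_left hble
    have hN := hrpos i₀ hi₀mem
    have hRi : ‖r i₀‖ ≤ R := hRmono i₀ (by omega)
    have hper : ∀ z, γ * |⟪r i₀, Φ z⟫| ≤ B * R^(1-β) := by
      intro z
      have hRpow : (0:ℝ) ≤ B * R^(1-β) :=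
        mul_nonneg hB0 (Real.rpow_nonneg hRpos.le _)
      by_cases hz0 : ⟪r i₀, Φ z⟫ = 0
      · rw [hz0]; simpa using hRpow
      have habs : 0 < |⟪r i₀, Φ z⟫| := abs_pos.2 hz0
      have hPz : |⟪r i₀, Φ z⟫| ≤ ‖r i₀‖ * P i₀ z := hiP i₀ z
      have hkey := hgreedy i₀ hi₀mem z
      have hPb : (|⟪r i₀, Φ z⟫| / ‖r i₀‖) ^ (1-β) ≤ P i₀ z ^ (1-β) := by
        refine Real.rpow_le_rpow (by positivity) ?_ (by linarith)
        rw [div_le_iff₀ hN]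
        linarith [hPz]
      have hNpow : (0:ℝ) < ‖r i₀‖ ^ (1-β) := Real.rpow_pos_of_pos hN _
      have hchain : γ * |⟪r i₀, Φ z⟫| ^ β * (|⟪r i₀, Φ z⟫| / ‖r i₀‖)^(1-β)
          ≤ c i₀ * ‖d i₀‖^β := by
        refine le_trans ?_ hkey
        refine mul_le_mul_of_nonneg_left hPb ?_
        exact mul_nonneg hγ0.le (Real.rpow_nonneg (abs_nonneg _) _)
      have ht : |⟪r i₀, Φ z⟫| ^ β * |⟪r i₀, Φ z⟫| ^ (1-β) = |⟪r i₀, Φ z⟫| := by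
        rw [← Real.rpow_add habs]; norm_num
      have hrewrite : γ * |⟪r i₀, Φ z⟫| ^ β * (|⟪r i₀, Φ z⟫| / ‖r i₀‖)^(1-β)
          * ‖r i₀‖^(1-β) = γ * |⟪r i₀, Φ z⟫| := by
        rw [Real.div_rpow (abs_nonneg _) hN.le]
        calc γ * |⟪r i₀, Φ z⟫| ^ β
              * (|⟪r i₀, Φ z⟫| ^ (1-β) / ‖r i₀‖^(1-β)) * ‖r i₀‖^(1-β)
            = γ * (|⟪r i₀, Φ z⟫| ^ β * |⟪r i₀, Φ z⟫| ^ (1-β))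
              * (‖r i₀‖^(1-β) / ‖r i₀‖^(1-β)) := by ring
          _ = γ * |⟪r i₀, Φ z⟫| := by rw [ht, div_self hNpow.ne']; ring
      have h1 : γ * |⟪r i₀, Φ z⟫| ≤ (c i₀ * ‖d i₀‖^β) * ‖r i₀‖^(1-β) := by
        rw [← hrewrite]
        exact mul_le_mul_of_nonneg_right hchain hNpow.le
      refine le_trans h1 ?_
      refine mul_le_mul haB (Real.rpow_le_rpow hN.le hRi (by linarith)) hNpow.le hB0
    have hsup : supNorm Φ (r i₀) ≤ γ⁻¹ * (B * R^(1-β)) := by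
      refine supNorm_le Φ (r i₀) (fun z => ?_)
      have := hper z
      calc |⟪r i₀, Φ z⟫| = γ⁻¹ * (γ * |⟪r i₀, Φ z⟫|) := by
            field_simp
        _ ≤ γ⁻¹ * (B * R^(1-β)) :=
            mul_le_mul_of_nonneg_left this (inv_nonneg.2 hγ0.le)
    refine le_trans hsup ?_
    rw [hmax]
    rw [show (1:ℝ)/1 = 1 by norm_num, Real.rpow_one]
    have hBR_eq : B * R^(1-β) = 2 * (Real.sqrt n)^(1-β) * ε * R := by
      rw [hB_def, hdiv]
      calc 2 * Real.sqrt n * ε * (R ^ β / Real.sqrt n ^ β) * R ^ (1 - β)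
          = 2 * (Real.sqrt n / Real.sqrt n ^ β) * ε * (R^β * R^(1-β)) := by ring
        _ = 2 * (Real.sqrt n)^(1-β) * ε * R := by rw [hsdivs, hRR]
    rw [hBR_eq, hsnpow]
    rw [mul_assoc γ⁻¹]
    refine mul_le_mul_of_nonneg_left ?_ (inv_nonneg.2 hγ0.le)
    have h5 : 2 * (n:ℝ)^((1-β)/2) * ε ≤ Real.sqrt 5 * (n:ℝ)^((1-β)/2) * ε := by
      nlinarith [mul_le_mul_of_nonneg_right h25 (mul_nonneg hN2nn hε.le)]
    exact mul_le_mul_of_nonneg_right h5 hRpos.le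
  · -- case 1 < β
    push_neg at hble
    have hmax : max 1 β = β := max_eq_right hble.le
    have hβpos : 0 < β := by linarith
    have hper : ∀ z, γ * |⟪r i₀, Φ z⟫|^β ≤ B := by
      intro z
      have hkey := hgreedy i₀ hi₀mem z
      by_cases hPz : P i₀ z = 0
      · have hz0 := hPz_zero i₀ z hPz
        rw [hz0]
        rw [abs_zero, Real.zero_rpow hβpos.ne', mul_zero]
        exact hB0
      have hPzpos : 0 < P i₀ z := lt_of_le_of_ne (hP_nonneg _ _) (Ne.symm hPz)
      have h1 : (1:ℝ) ≤ P i₀ z ^ (1-β) :=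
        Real.one_le_rpow_of_pos_of_le_one_of_nonpos hPzpos (hP_le_one _ _) (by linarith)
      have h2 : γ * |⟪r i₀, Φ z⟫|^β ≤ γ * |⟪r i₀, Φ z⟫|^β * P i₀ z ^ (1-β) := by
        nlinarith [mul_nonneg hγ0.le (Real.rpow_nonneg (abs_nonneg ⟪r i₀, Φ z⟫) β)]
      exact le_trans (le_trans h2 hkey) haB
    have hsup : supNorm Φ (r i₀) ≤ (γ⁻¹ * B) ^ ((1:ℝ)/β) := by
      refine supNorm_le Φ (r i₀) (fun z => ?_)
      have h2 : |⟪r i₀, Φ z⟫|^β ≤ γ⁻¹ * B := by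
        calc |⟪r i₀, Φ z⟫|^β = γ⁻¹ * (γ * |⟪r i₀, Φ z⟫|^β) := by field_simp
          _ ≤ γ⁻¹ * B := mul_le_mul_of_nonneg_left (hper z) (inv_nonneg.2 hγ0.le)
      have h3 : |⟪r i₀, Φ z⟫| = (|⟪r i₀, Φ z⟫|^β)^((1:ℝ)/β) := by
        rw [← Real.rpow_mul (abs_nonneg _), mul_one_div, div_self hβpos.ne',
          Real.rpow_one]
      rw [h3]
      exact Real.rpow_le_rpow (Real.rpow_nonneg (abs_nonneg _) _) h2 (by positivity)
    refine le_trans hsup ?_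
    rw [hmax]
    have hB_eq : B = 2 * (Real.sqrt n)^(1-β) * ε * R^β := by
      rw [hB_def, hdiv]
      calc 2 * Real.sqrt n * ε * (R ^ β / Real.sqrt n ^ β)
          = 2 * (Real.sqrt n / Real.sqrt n ^ β) * ε * R^β := by ring
        _ = 2 * (Real.sqrt n)^(1-β) * ε * R^β := by rw [hsdivs]
    have hB' : B ≤ (Real.sqrt 5 * (n:ℝ)^((1-β)/2) * ε) * R^β := by
      rw [hB_eq, hsnpow]
      have h5 : 2 * (n:ℝ)^((1-β)/2) * ε ≤ Real.sqrt 5 * (n:ℝ)^((1-β)/2) * ε := by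
        nlinarith [mul_le_mul_of_nonneg_right h25 (mul_nonneg hN2nn hε.le)]
      exact mul_le_mul_of_nonneg_right h5 (Real.rpow_nonneg hRpos.le β)
    have hγinv : 1 ≤ γ⁻¹ := one_le_inv_iff₀.2 ⟨hγ0, hγ1⟩
    have hA0 : (0:ℝ) ≤ Real.sqrt 5 * (n:ℝ)^((1-β)/2) * ε := by positivity
    calc (γ⁻¹ * B) ^ ((1:ℝ)/β)
        ≤ (γ⁻¹ * ((Real.sqrt 5 * (n:ℝ)^((1-β)/2) * ε) * R^β)) ^ ((1:ℝ)/β) := by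
          refine Real.rpow_le_rpow (by positivity) ?_ (by positivity)
          exact mul_le_mul_of_nonneg_left hB' (inv_nonneg.2 hγ0.le)
      _ = γ⁻¹ ^ ((1:ℝ)/β) * (Real.sqrt 5 * (n:ℝ)^((1-β)/2) * ε) ^ ((1:ℝ)/β) * R := by
          rw [Real.mul_rpow (inv_nonneg.2 hγ0.le) (by positivity),
            Real.mul_rpow hA0 (Real.rpow_nonneg hRpos.le _),
            ← Real.rpow_mul hRpos.le, mul_one_div, div_self hβpos.ne', Real.rpow_one]
          ring
      _ ≤ γ⁻¹ * (Real.sqrt 5 * (n:ℝ)^((1-β)/2) * ε) ^ ((1:ℝ)/β) * R := by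
          have hgg : γ⁻¹ ^ ((1:ℝ)/β) ≤ γ⁻¹ := by
            calc γ⁻¹ ^ ((1:ℝ)/β) ≤ γ⁻¹ ^ (1:ℝ) := by
                  refine Real.rpow_le_rpow_of_exponent_le hγinv ?_
                  rw [div_le_one hβpos]
                  linarith
              _ = γ⁻¹ := Real.rpow_one _
          refine mul_le_mul_of_nonneg_right ?_ hRpos.le
          exact mul_le_mul_of_nonneg_right hgg (Real.rpow_nonneg hA0 _)
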